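/- For any peak Λ ≤ 1/2, if in a strategy profile σ of a swap Schelling game (G,b,Λ) two agents i and j with f_i(σ) < Λ and f_j(σ) > Λ perform a profitable swap, then the degree of the node occupied by i strictly exceeds the degree of the node occupied by j, i.e., δ(σ(i)) > δ(σ(j)). -/
import Mathlib


open Finset

namespace SwapSchelling

variable {V : Type*} [Fintype V] [DecidableEq V]

open scoped Classical in
/-- The closed neighborhood `N[v]` of a node `v` in `G`, as a `Finset`. -/
noncomputable def closedNbhd (G : SimpleGraph V) (v : V) : Finset V :=
  univ.filter (fun u => u = v ∨ G.Adj v u)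

open scoped Classical in
/-- The degree `δ(v)` of a node `v` in `G`. -/
noncomputable def deg (G : SimpleGraph V) (v : V) : ℕ :=
  (univ.filter (fun u => G.Adj v u)).card

/-- The maximum degree `Δ(G)`. -/
noncomputable def maxDeg (G : SimpleGraph V) : ℕ := univ.sup (deg G)

/-- The minimum degree `δ(G)`. -/
noncomputable def minDeg (G : SimpleGraph V) : ℕ := sInf (Set.range (deg G))

open scoped Classical in
/-- `frac G c v` is the fraction of nodes in the closed neighborhood of `v` that have
the same color as `v` (that is, `f_i(σ)` for the agent `i` occupying node `v`). -/
noncomputable def frac (G : SimpleGraph V) (c : V → Bool) (v : V) : ℝ :=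
  (((closedNbhd G v).filter (fun u => c u = c v)).card : ℝ) / ((closedNbhd G v).card : ℝ)

/-- The coloring obtained from `c` after the agents on nodes `v` and `w` swap positions. -/
def swapColor (c : V → Bool) (v w : V) : V → Bool := c ∘ Equiv.swap v w

/-- A single-peaked utility function `p` with peak at `Λ`: `p 0 = 0`, `p` is strictly
increasing on `[0,Λ]`, `p Λ = 1`, and `p x = p (Λ(1-x)/(1-Λ))` for `x ∈ [Λ,1]`. -/
structure IsSinglePeaked (p : ℝ → ℝ) (Λ : ℝ) : Prop where
  peak_mem : Λ ∈ Set.Ioo (0 : ℝ) 1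
  map_zero : p 0 = 0
  strictMonoOn : StrictMonoOn p (Set.Icc 0 Λ)
  map_peak : p Λ = 1
  symm : ∀ x ∈ Set.Icc Λ 1, p x = p (Λ * (1 - x) / (1 - Λ))

/-- A strategy profile: a 2-coloring of the nodes with exactly `b` blue (`true`) nodes. -/
def IsProfile (c : V → Bool) (b : ℕ) : Prop :=
  (univ.filter (fun v => c v = true)).card = b

/-- The structural data of a swap Schelling game `(G, b, Λ)` with utility function `p`:
`G` is connected, there are `b` blue agents with `1 ≤ b ≤ n/2`, and `p` is a
single-peaked utility function with peak `Λ`. -/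
structure IsGame (G : SimpleGraph V) (b : ℕ) (Λ : ℝ) (p : ℝ → ℝ) : Prop where
  connected : G.Connected
  one_le_b : 1 ≤ b
  b_le_half : 2 * b ≤ Fintype.card V
  singlePeaked : IsSinglePeaked p Λ

/-- The swap of the two (differently colored) agents occupying nodes `v` and `w`
is profitable: both agents strictly increase their utility. -/
def ProfitableSwap (G : SimpleGraph V) (p : ℝ → ℝ) (c : V → Bool) (v w : V) : Prop :=
  c v ≠ c w ∧
  p (frac G (swapColor c v w) w) > p (frac G c v) ∧
  p (frac G (swapColor c v w) v) > p (frac G c w)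

/-- A swap equilibrium: no profitable swap exists. -/
def IsSwapEquilibrium (G : SimpleGraph V) (p : ℝ → ℝ) (c : V → Bool) : Prop :=
  ∀ v w, ¬ ProfitableSwap G p c v w

open scoped Classical in
/-- The degree of integration: the number of non-segregated agents. -/
noncomputable def DoI (G : SimpleGraph V) (c : V → Bool) : ℕ :=
  (univ.filter (fun v => frac G c v ≠ 1)).card

open scoped Classical in
/-- The number of monochromatic edges of `G` under the coloring `c`. -/
noncomputable def Phi (G : SimpleGraph V) (c : V → Bool) : ℕ :=
  (G.edgeFinset.filter (fun e => ∀ u ∈ e, ∀ w ∈ e, c u = c w)).card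

open scoped Classical in
/-- The number of edges of `G`. -/
noncomputable def numEdges (G : SimpleGraph V) : ℕ :=
  (univ.filter (fun e : Sym2 V => e ∈ G.edgeSet)).card

/-- A finset of nodes is an independent set of `G`. -/
def IsIndepSet (G : SimpleGraph V) (s : Finset V) : Prop :=
  ∀ u ∈ s, ∀ w ∈ s, ¬ G.Adj u w

open scoped Classical in
/-- The independence number `α(G)`. -/
noncomputable def indepNum (G : SimpleGraph V) : ℕ :=
  univ.sup (fun s : Finset V => if IsIndepSet G s then s.card else 0)

open scoped Classical in
/-- The degree of `v` inside the subgraph of `G` induced by the node set `s`. -/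
noncomputable def degOn (G : SimpleGraph V) (s : Finset V) (v : V) : ℕ :=
  (s.filter (fun u => G.Adj v u)).card


section Helpers

open scoped Classical

set_option linter.unusedSectionVars false

variable {V : Type*} [Fintype V] [DecidableEq V] (G : SimpleGraph V)

lemma mem_closedNbhd {v u : V} : u ∈ closedNbhd G v ↔ u = v ∨ G.Adj v u := by
  classical
  simp [closedNbhd]

lemma card_closedNbhd (v : V) : (closedNbhd G v).card = deg G v + 1 := by
  classical
  have h : closedNbhd G v = insert v (univ.filter (fun u => G.Adj v u)) := by
    ext u
    simp [mem_closedNbhd, or_comm]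
  rw [h, Finset.card_insert_of_notMem (by simp), deg]

lemma self_mem_closedNbhd (v : V) : v ∈ closedNbhd G v := by
  rw [mem_closedNbhd]; exact Or.inl rfl

lemma swapColor_left (c : V → Bool) (v w : V) : swapColor c v w v = c w := by
  simp [swapColor]

lemma swapColor_right (c : V → Bool) (v w : V) : swapColor c v w w = c v := by
  simp [swapColor]

lemma swapColor_other (c : V → Bool) {v w u : V} (h1 : u ≠ v) (h2 : u ≠ w) :
    swapColor c v w u = c u := by
  simp [swapColor, Equiv.swap_apply_of_ne_of_ne h1 h2]

lemma swapColor_comm (c : V → Bool) (v w : V) : swapColor c v w = swapColor c w v := by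
  unfold swapColor
  rw [Equiv.swap_comm]

lemma bool_eq_iff_ne {a b x : Bool} (h : a ≠ b) : x = a ↔ ¬ x = b := by
  cases a <;> cases b <;> cases x <;> simp_all

lemma frac_nonneg (c : V → Bool) (v : V) : 0 ≤ frac G c v := by
  unfold frac; positivity

lemma frac_le_one (c : V → Bool) (v : V) : frac G c v ≤ 1 := by
  classical
  unfold frac
  have h0 : (0:ℝ) < ((closedNbhd G v).card : ℝ) := by
    have := self_mem_closedNbhd G v
    have : 0 < (closedNbhd G v).card := Finset.card_pos.2 ⟨v, this⟩
    exact_mod_cast this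
  rw [div_le_one h0]
  exact_mod_cast Finset.card_filter_le _ _

lemma one_div_le_frac (c : V → Bool) (v : V) :
    1 / (((deg G v : ℝ)) + 1) ≤ frac G c v := by
  classical
  have hmem : v ∈ (closedNbhd G v).filter (fun u => c u = c v) := by
    simp [Finset.mem_filter, self_mem_closedNbhd]
  have h1 : 1 ≤ (((closedNbhd G v).filter (fun u => c u = c v)).card : ℝ) := by
    exact_mod_cast Finset.card_pos.2 ⟨v, hmem⟩
  have hcard : ((closedNbhd G v).card : ℝ) = (deg G v : ℝ) + 1 := by
    rw [card_closedNbhd]; push_cast; ring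
  have h0 : (0:ℝ) < (deg G v : ℝ) + 1 := by positivity
  unfold frac
  rw [hcard, div_le_div_iff₀ h0 h0]
  nlinarith

lemma frac_swap_not_adj (c : V → Bool) {v w : V} (hvw : v ≠ w) (hcc : c v ≠ c w)
    (hadj : ¬ G.Adj v w) :
    frac G (swapColor c v w) w = 1 - frac G c w + 1 / ((deg G w : ℝ) + 1) := by
  classical
  have hvN : v ∉ closedNbhd G w := by
    rw [mem_closedNbhd]
    push_neg
    exact ⟨hvw, fun h => hadj h.symm⟩
  have hset : (closedNbhd G w).filter (fun u => swapColor c v w u = swapColor c v w w)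
      = insert w ((closedNbhd G w).filter (fun u => ¬ (c u = c w))) := by
    ext u
    simp only [Finset.mem_filter, Finset.mem_insert]
    by_cases huw : u = w
    · subst huw
      simp [self_mem_closedNbhd]
    · have hiff : u ∈ closedNbhd G w → (swapColor c v w u = swapColor c v w w ↔ ¬ c u = c w) := by
        intro hu
        have huv : u ≠ v := fun h => hvN (h ▸ hu)
        rw [swapColor_other c huv huw, swapColor_right]
        exact bool_eq_iff_ne hcc
      constructor
      · rintro ⟨hu, he⟩
        exact Or.inr ⟨hu, (hiff hu).1 he⟩
      · rintro (h | ⟨hu, he⟩)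
        · exact absurd h huw
        · exact ⟨hu, (hiff hu).2 he⟩
  have hwO : w ∉ (closedNbhd G w).filter (fun u => ¬ (c u = c w)) := by simp
  have hsum := Finset.card_filter_add_card_filter_not
    (s := closedNbhd G w) (p := fun u => c u = c w)
  have hcard : ((closedNbhd G w).filter
      (fun u => swapColor c v w u = swapColor c v w w)).card
      = ((closedNbhd G w).filter (fun u => ¬ (c u = c w))).card + 1 := by
    rw [hset, Finset.card_insert_of_notMem hwO]
  have hn : ((closedNbhd G w).card : ℝ) = (deg G w : ℝ) + 1 := by
    rw [card_closedNbhd]; push_cast; ring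
  have h0 : (0:ℝ) < (deg G w : ℝ) + 1 := by positivity
  unfold frac
  rw [hcard, hn]
  have hOr : (((closedNbhd G w).filter (fun u => ¬ (c u = c w))).card : ℝ)
      = ((deg G w : ℝ) + 1) - (((closedNbhd G w).filter (fun u => c u = c w)).card : ℝ) := by
    have : (((closedNbhd G w).filter (fun u => c u = c w)).card : ℝ)
        + (((closedNbhd G w).filter (fun u => ¬ (c u = c w))).card : ℝ)
        = (deg G w : ℝ) + 1 := by
      rw [← hn]; exact_mod_cast hsum
    linarith
  push_cast
  rw [hOr]
  field_simp

lemma frac_swap_adj (c : V → Bool) {v w : V} (hcc : c v ≠ c w) (hadj : G.Adj v w) :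
    frac G (swapColor c v w) w = 1 - frac G c w := by
  classical
  have hvw : v ≠ w := hadj.ne
  have hvN : v ∈ (closedNbhd G w).filter (fun u => ¬ (c u = c w)) := by
    simp only [Finset.mem_filter, mem_closedNbhd]
    exact ⟨Or.inr hadj.symm, hcc⟩
  have hset : (closedNbhd G w).filter (fun u => swapColor c v w u = swapColor c v w w)
      = insert w (((closedNbhd G w).filter (fun u => ¬ (c u = c w))).erase v) := by
    ext u
    simp only [Finset.mem_filter, Finset.mem_insert, Finset.mem_erase]
    by_cases huw : u = w
    · subst huw
      simp [self_mem_closedNbhd]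
    · by_cases huv : u = v
      · subst huv
        rw [swapColor_left, swapColor_right]
        simp [Ne.symm hcc, huw]
      · rw [swapColor_other c huv huw, swapColor_right]
        rw [bool_eq_iff_ne hcc]
        tauto
  have hwO : w ∉ ((closedNbhd G w).filter (fun u => ¬ (c u = c w))).erase v := by simp
  have hsum := Finset.card_filter_add_card_filter_not
    (s := closedNbhd G w) (p := fun u => c u = c w)
  have hcard : ((closedNbhd G w).filter
      (fun u => swapColor c v w u = swapColor c v w w)).card
      = ((closedNbhd G w).filter (fun u => ¬ (c u = c w))).card := by
    rw [hset, Finset.card_insert_of_notMem hwO, Finset.card_erase_of_mem hvN,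
      Nat.sub_add_cancel (Finset.card_pos.2 ⟨v, hvN⟩)]
  have hn : ((closedNbhd G w).card : ℝ) = (deg G w : ℝ) + 1 := by
    rw [card_closedNbhd]; push_cast; ring
  have h0 : (0:ℝ) < (deg G w : ℝ) + 1 := by positivity
  unfold frac
  rw [hcard, hn]
  have hOr : (((closedNbhd G w).filter (fun u => ¬ (c u = c w))).card : ℝ)
      = ((deg G w : ℝ) + 1) - (((closedNbhd G w).filter (fun u => c u = c w)).card : ℝ) := by
    have : (((closedNbhd G w).filter (fun u => c u = c w)).card : ℝ)
        + (((closedNbhd G w).filter (fun u => ¬ (c u = c w))).card : ℝ)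
        = (deg G w : ℝ) + 1 := by
      rw [← hn]; exact_mod_cast hsum
    linarith
  rw [hOr]
  field_simp

lemma lt_of_p_lt {p : ℝ → ℝ} {Λ : ℝ} (hp : IsSinglePeaked p Λ) {x y : ℝ}
    (hx : x ∈ Set.Icc 0 Λ) (hy : y ∈ Set.Icc 0 Λ) (h : p x < p y) : x < y := by
  by_contra h'
  push_neg at h'
  rcases eq_or_lt_of_le h' with h'' | h''
  · rw [h''] at h; exact lt_irrefl _ h
  · exact absurd h (not_lt.2 (le_of_lt (hp.strictMonoOn hy hx h'')))

end Helpers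


set_option maxHeartbeats 1000000 in
/-- For any peak `Λ ≤ 1/2`, a profitable swap between an agent below the
peak and an agent above the peak requires that the node of the former has strictly
larger degree than the node of the latter. -/
theorem profitable_swap_degree_lt
    {V : Type*} [Fintype V] [DecidableEq V] (G : SimpleGraph V) (b : ℕ) (Λ : ℝ) (p : ℝ → ℝ)
    (hgame : IsGame G b Λ p) (hΛ : Λ ≤ 1 / 2)
    (c : V → Bool) (hc : IsProfile c b) (v w : V)
    (hv : frac G c v < Λ) (hw : Λ < frac G c w)
    (hswap : ProfitableSwap G p c v w) :
    deg G w < deg G v := by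
  classical
  obtain ⟨hcc, hi, hj⟩ := hswap
  have hp := hgame.singlePeaked
  have hΛ0 : (0:ℝ) < Λ := hp.peak_mem.1
  have hΛ1 : Λ < 1 := hp.peak_mem.2
  have h1Λ : (0:ℝ) < 1 - Λ := by linarith
  have hvw : v ≠ w := fun h => hcc (h ▸ rfl)
  set dv : ℝ := (deg G v : ℝ) + 1 with hdv
  set dw : ℝ := (deg G w : ℝ) + 1 with hdw
  have hdv0 : (0:ℝ) < dv := by positivity
  have hdw0 : (0:ℝ) < dw := by positivity
  have hFv0 : 0 ≤ frac G c v := frac_nonneg G c v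
  have hFw1 : frac G c w ≤ 1 := frac_le_one G c w
  have hFv1 : frac G c v ≤ 1 := frac_le_one G c v
  have hFvlb : 1/dv ≤ frac G c v := one_div_le_frac G c v
  have hFwlb : 1/dw ≤ frac G c w := one_div_le_frac G c w
  have hivp : (0:ℝ) < 1/dv := by positivity
  have hiwp : (0:ℝ) < 1/dw := by positivity
  by_cases hadj : G.Adj v w
  · exfalso
    have e1 : frac G (swapColor c v w) w = 1 - frac G c w := frac_swap_adj G c hcc hadj
    have e2 : frac G (swapColor c v w) v = 1 - frac G c v := by
      rw [swapColor_comm]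
      exact frac_swap_adj G c (Ne.symm hcc) hadj.symm
    rw [e1] at hi
    rw [e2] at hj
    -- agent j's condition
    have m1 : (1 - frac G c v) ∈ Set.Icc Λ 1 := ⟨by linarith, by linarith⟩
    have m2 : frac G c w ∈ Set.Icc Λ 1 := ⟨le_of_lt hw, hFw1⟩
    rw [hp.symm _ m1, hp.symm _ m2] at hj
    have mem1 : Λ * (1 - (1 - frac G c v)) / (1 - Λ) ∈ Set.Icc 0 Λ := by
      constructor
      · apply div_nonneg _ h1Λ.le; nlinarith
      · rw [div_le_iff₀ h1Λ]; nlinarith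
    have mem2 : Λ * (1 - frac G c w) / (1 - Λ) ∈ Set.Icc 0 Λ := by
      constructor
      · apply div_nonneg _ h1Λ.le; nlinarith
      · rw [div_le_iff₀ h1Λ]; nlinarith
    have hlt := lt_of_p_lt hp mem2 mem1 hj
    have hj' : 1 - frac G c w < frac G c v := by
      rw [div_lt_div_iff₀ h1Λ h1Λ] at hlt
      nlinarith [mul_pos hΛ0 h1Λ]
    -- agent i's condition
    by_cases hcase : 1 - frac G c w ≤ Λ
    · have := lt_of_p_lt hp ⟨hFv0, hv.le⟩ ⟨by linarith, hcase⟩ hi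
      linarith
    · push_neg at hcase
      rw [hp.symm _ ⟨hcase.le, by linarith⟩] at hi
      have mem3 : Λ * (1 - (1 - frac G c w)) / (1 - Λ) ∈ Set.Icc 0 Λ := by
        constructor
        · apply div_nonneg _ h1Λ.le; nlinarith
        · rw [div_le_iff₀ h1Λ]; nlinarith
      have hI := lt_of_p_lt hp ⟨hFv0, hv.le⟩ mem3 hi
      rw [lt_div_iff₀ h1Λ] at hI
      nlinarith [mul_lt_mul_of_pos_right hj' h1Λ]
  · have e1 : frac G (swapColor c v w) w = 1 - frac G c w + 1/dw :=
      frac_swap_not_adj G c hvw hcc hadj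
    have e2 : frac G (swapColor c v w) v = 1 - frac G c v + 1/dv := by
      rw [swapColor_comm]
      exact frac_swap_not_adj G c (Ne.symm hvw) (Ne.symm hcc) (fun h => hadj h.symm)
    rw [e1] at hi
    rw [e2] at hj
    -- agent j's condition
    have m1 : (1 - frac G c v + 1/dv) ∈ Set.Icc Λ 1 := ⟨by nlinarith, by nlinarith⟩
    have m2 : frac G c w ∈ Set.Icc Λ 1 := ⟨le_of_lt hw, hFw1⟩
    rw [hp.symm _ m1, hp.symm _ m2] at hj
    have mem1 : Λ * (1 - (1 - frac G c v + 1/dv)) / (1 - Λ) ∈ Set.Icc 0 Λ := by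
      constructor
      · apply div_nonneg _ h1Λ.le; nlinarith
      · rw [div_le_iff₀ h1Λ]; nlinarith
    have mem2 : Λ * (1 - frac G c w) / (1 - Λ) ∈ Set.Icc 0 Λ := by
      constructor
      · apply div_nonneg _ h1Λ.le; nlinarith
      · rw [div_le_iff₀ h1Λ]; nlinarith
    have hlt := lt_of_p_lt hp mem2 mem1 hj
    have hj' : 1 - frac G c v + 1/dv < frac G c w := by
      rw [div_lt_div_iff₀ h1Λ h1Λ] at hlt
      nlinarith [mul_pos hΛ0 h1Λ]
    -- agent i's condition
    have hkey : 1/dv < 1/dw := by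
      by_cases hcase : 1 - frac G c w + 1/dw ≤ Λ
      · have := lt_of_p_lt hp ⟨hFv0, hv.le⟩ ⟨by nlinarith, hcase⟩ hi
        linarith
      · push_neg at hcase
        rw [hp.symm _ ⟨hcase.le, by nlinarith⟩] at hi
        have mem3 : Λ * (1 - (1 - frac G c w + 1/dw)) / (1 - Λ) ∈ Set.Icc 0 Λ := by
          constructor
          · apply div_nonneg _ h1Λ.le; nlinarith
          · rw [div_le_iff₀ h1Λ]; nlinarith
        have hI := lt_of_p_lt hp ⟨hFv0, hv.le⟩ mem3 hi
        rw [lt_div_iff₀ h1Λ] at hI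
        nlinarith [mul_lt_mul_of_pos_right hj' h1Λ]
    have hdlt : dw < dv := lt_of_one_div_lt_one_div hdv0 hkey
    have : (deg G w : ℝ) < (deg G v : ℝ) := by
      rw [hdv, hdw] at hdlt; linarith
    exact_mod_cast this


end SwapSchelling
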